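/- Let E be a real normed vector space, β a type with a zero element, f : E → β → E, s ∈ E with f s 0 = 0, and let 0 < d ≤ t_f. Let y : ℝ → E and v : ℝ → β satisfy: HasDerivAt y (−f (y t) (v t)) t for all t ∈ (0, t_f), y t = s for all t ∈ [d, t_f], and v t = 0 for all t ∈ (d, t_f). Define the padded time-reversed trajectory x t := y (t_f − t) and control u t := 0 for t < t_f − d, u t := v (t_f − t) for t ≥ t_f − d. Then HasDerivAt x (f (x t) (u t)) t for all t ∈ (0, t_f); that is, the padded reversal of a trajectory of the time-reversed system that parks at the rest point s is a trajectory of the forward system ẋ = f(x, u) on the whole interval, including the waiting segment and the junction time t_f − d. -/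

import Mathlib

/-- The padded reversal of a trajectory of the time-reversed system that parks at a rest point
`s` is a trajectory of the forward system `ẋ = f(x, u)` on all of `(0, t_f)`. -/
theorem padded_reversal_hasDerivAt
    {E : Type*} [NormedAddCommGroup E] [NormedSpace ℝ E] {β : Type*} [Zero β]
    (f : E → β → E) (s : E) (hrest : f s 0 = 0)
    (t_f d : ℝ) (hd0 : 0 < d) (hdt : d ≤ t_f)
    (y : ℝ → E) (v : ℝ → β)
    (hder : ∀ t ∈ Set.Ioo (0:ℝ) t_f, HasDerivAt y (-f (y t) (v t)) t)
    (hpark : ∀ t ∈ Set.Icc d t_f, y t = s)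
    (hv : ∀ t ∈ Set.Ioo d t_f, v t = 0) :
    ∀ t ∈ Set.Ioo (0:ℝ) t_f,
      HasDerivAt (fun τ => y (t_f - τ))
        (f ((fun τ => y (t_f - τ)) t)
           ((fun τ => if τ < t_f - d then (0:β) else v (t_f - τ)) t)) t := by
  intro t ht
  have hσ : t_f - t ∈ Set.Ioo (0:ℝ) t_f := ⟨by linarith [ht.2], by linarith [ht.1]⟩
  have hneg : HasDerivAt (fun τ : ℝ => t_f - τ) (-1) t := by
    simpa using (hasDerivAt_id t).const_sub t_f
  have h1 := (hder _ hσ).scomp t hneg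
  have heq : (if t < t_f - d then (0:β) else v (t_f - t)) = v (t_f - t) := by
    split_ifs with h
    · exact (hv _ ⟨by linarith, hσ.2⟩).symm
    · rfl
  simp only [heq]
  simpa [Function.comp_def] using h1
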